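/- Let μ be a Markov kernel on a measurable space X, S ⊆ X measurable, and suppose B : X → ℝ≥0 is a nonnegative measurable function with constants γ > η ≥ 0 and β ≥ 0 satisfying: (a) B(x) ≤ η for all x in an initial set X₀ ⊆ S, (b) B(x) ≥ γ for all x ∉ S, and (c) E_μ[B(X_+)|X=x] − B(x) ≤ β for all x ∈ S. Then for every x₀ ∈ X₀, the probability that the chain started at x₀ exits S within T steps is at most (η + βT)/γ; equivalently the T-step safety probability is at least 1 − (η + βT)/γ. -/
import Mathlib


open MeasureTheory ENNReal Classical
open scoped Classical

/-- Stochastic barrier certificate bound. If `B ≥ 0` satisfies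
`B ≤ η` on the initial set `X₀ ⊆ S`, `B ≥ γ` off `S`, and the expected one-step
increase of `B` is at most `β` on `S`, then the probability of exiting `S`
within `T` steps (given by the standard exit-probability recursion `u`) is at
most `(η + βT)/γ`; equivalently the `T`-step safety probability is at least
`1 − (η + βT)/γ`. -/
theorem stmt_3 {X : Type*} [MeasurableSpace X] (κ : ProbabilityTheory.Kernel X X)
    [ProbabilityTheory.IsMarkovKernel κ] (S X₀ : Set X) (hS : MeasurableSet S)
    (hX₀ : X₀ ⊆ S) (T : ℕ)
    (B : X → ℝ) (hBmeas : Measurable B) (hBnn : ∀ x, 0 ≤ B x)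
    (hBint : ∀ x, Integrable B (κ x))
    (γ η β : ℝ) (hγη : η < γ) (hη : 0 ≤ η) (hβ : 0 ≤ β)
    (ha : ∀ x ∈ X₀, B x ≤ η)
    (hb : ∀ x ∉ S, γ ≤ B x)
    (hc : ∀ x ∈ S, (∫ y, B y ∂(κ x)) - B x ≤ β)
    (u : ℕ → X → ℝ)
    (hu0 : ∀ x, u 0 x = if x ∈ S then 0 else 1)
    (huS : ∀ n x, u (n + 1) x =
      (if x ∈ S then (0 : ℝ) else 1) +
        (if x ∈ S then (1 : ℝ) else 0) * ∫ y, u n y ∂(κ x)) :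
    ∀ x₀ ∈ X₀, u T x₀ ≤ (η + β * T) / γ ∧ 1 - (η + β * T) / γ ≤ 1 - u T x₀ := by
  have hγ : 0 < γ := lt_of_le_of_lt hη hγη
  have key : ∀ n, Measurable (u n) ∧ (∀ x, 0 ≤ u n x ∧ u n x ≤ 1) ∧
      ∀ x, u n x ≤ (B x + β * n) / γ := by
    intro n
    induction n with
    | zero =>
      have hfun : u 0 = fun x => if x ∈ S then (0 : ℝ) else 1 := funext hu0
      refine ⟨?_, ?_, ?_⟩
      · rw [hfun]; exact Measurable.ite hS measurable_const measurable_const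
      · intro x; rw [hu0]; split <;> norm_num
      · intro x
        rw [hu0]
        by_cases hx : x ∈ S
        · simp only [hx, if_true]
          exact div_nonneg (by nlinarith [hBnn x]) hγ.le
        · simp only [hx, if_false]
          rw [le_div_iff₀ hγ, one_mul]
          have := hb x hx
          simp; linarith
    | succ n ih =>
      obtain ⟨hmeas, hbd, hle⟩ := ih
      -- measurability of the integral map
      have hint_meas : Measurable fun x => ∫ y, u n y ∂(κ x) := by
        have : StronglyMeasurable fun p : X × X => u n p.2 :=
          (hmeas.comp measurable_snd).stronglyMeasurable
        exact this.integral_kernel_prod_right' (κ := κ) |>.measurable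
      have hfun : u (n + 1) = fun x =>
          (if x ∈ S then (0 : ℝ) else 1) +
            (if x ∈ S then (1 : ℝ) else 0) * ∫ y, u n y ∂(κ x) := funext (huS n)
      have huint : ∀ x, Integrable (u n) (κ x) := by
        intro x
        refine Integrable.mono' (integrable_const 1) hmeas.aestronglyMeasurable ?_
        filter_upwards with y
        rw [Real.norm_eq_abs, abs_le]
        exact ⟨by linarith [(hbd y).1], (hbd y).2⟩
      have hint_bd : ∀ x, 0 ≤ (∫ y, u n y ∂(κ x)) ∧ (∫ y, u n y ∂(κ x)) ≤ 1 := by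
        intro x
        constructor
        · exact integral_nonneg fun y => (hbd y).1
        · calc (∫ y, u n y ∂(κ x)) ≤ ∫ _, (1 : ℝ) ∂(κ x) :=
            integral_mono (huint x) (integrable_const 1) fun y => (hbd y).2
          _ = 1 := by simp
      refine ⟨?_, ?_, ?_⟩
      · rw [hfun]
        exact (Measurable.ite hS measurable_const measurable_const).add
          ((Measurable.ite hS measurable_const measurable_const).mul hint_meas)
      · intro x
        rw [huS]
        by_cases hx : x ∈ S <;> simp [hx, (hint_bd x).1, (hint_bd x).2]
      · intro x
        rw [huS]
        by_cases hx : x ∈ S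
        · simp only [hx, if_true, one_mul, zero_add]
          have h1 : (∫ y, u n y ∂(κ x)) ≤ ∫ y, (B y + β * n) / γ ∂(κ x) := by
            refine integral_mono (huint x) ?_ hle
            exact ((hBint x).add (integrable_const _)).div_const γ
          have h2 : (∫ y, (B y + β * n) / γ ∂(κ x)) =
              ((∫ y, B y ∂(κ x)) + β * n) / γ := by
            rw [integral_div, integral_add (hBint x) (integrable_const _)]
            simp
          have h3 := hc x hx
          rw [h2] at h1
          refine h1.trans ?_
          rw [div_le_div_iff_of_pos_right hγ]
          push_cast
          linarith
        · simp only [hx, if_false, zero_mul, add_zero]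
          rw [le_div_iff₀ hγ, one_mul]
          have := hb x hx
          have : (0:ℝ) ≤ β * (n+1) := by positivity
          push_cast
          linarith [hb x hx]
  intro x₀ hx₀
  have h1 : u T x₀ ≤ (η + β * T) / γ := by
    refine ((key T).2.2 x₀).trans ?_
    rw [div_le_div_iff_of_pos_right hγ]
    linarith [ha x₀ hx₀]
  exact ⟨h1, by linarith⟩
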